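/- Let k ≥ 2, ε > 0, and let G be a C_{2k-1}-free graph on n ≥ 4k/ε vertices with minimum degree at least (1/(2k-1) + ε)n. If two vertices u, v of G are joined by a path of odd length at most 2k-3, then u and v have fewer than 5k² common neighbours. -/

import Mathlib

set_option maxHeartbeats 2000000

namespace CNLAux

open SimpleGraph Finset

/-- Parity/window lemma: if every pair of consecutive integers contains a `Q`-point,
and there is no pair of `Q`-points at (even) distance `2*t`, contradiction. -/
lemma window_diff (Q : ℕ → Prop) (hw : ∀ i, Q i ∨ Q (i+1)) (t : ℕ)
    (hno : ∀ i, ¬ (Q i ∧ Q (i + 2*t))) : False := by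
  have S1 : ∀ x, Q x → Q (x + 2*t + 1) := by
    intro x hx
    have h1 : ¬ Q (x + 2*t) := fun h => hno x ⟨hx, h⟩
    rcases hw (x + 2*t) with h | h
    · exact absurd h h1
    · exact h
  have S3 : ∀ x, ¬ (Q x ∧ Q (x+1)) := by
    rintro x ⟨h1, h2⟩
    have := S1 x h1
    have e : x + 2*t + 1 = (x+1) + 2*t := by ring
    exact hno (x+1) ⟨h2, e ▸ this⟩
  have S2 : ∀ x, Q x → Q (x + 2) := by
    intro x hx
    rcases hw (x+1) with h | h
    · exact absurd ⟨hx, h⟩ (S3 x)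
    · simpa [Nat.add_assoc] using h
  have S4 : ∀ j x, Q x → Q (x + 2*j) := by
    intro j
    induction j with
    | zero => simpa using fun x h => h
    | succ j ih =>
      intro x hx
      have := S2 _ (ih x hx)
      have e : x + 2*j + 2 = x + 2*(j+1) := by ring
      rwa [e] at this
  rcases hw 0 with h | h
  · exact hno 0 ⟨h, S4 t 0 h⟩
  · exact hno 1 ⟨h, S4 t 1 h⟩

section BuildW

variable {V : Type} {G : SimpleGraph V}

/-- Build a walk along a function `f : ℕ → V` with consecutive adjacency. -/
def buildW (G : SimpleGraph V) (f : ℕ → V) (s : ℕ) :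
    (m : ℕ) → (∀ i, s ≤ i → i < s + m → G.Adj (f i) (f (i+1))) → G.Walk (f s) (f (s + m))
  | 0, _ => Walk.nil
  | m+1, h =>
      (buildW G f s m (fun i h1 h2 => h i h1 (by omega))).concat
        (h (s+m) (by omega) (by omega))

@[simp] lemma buildW_length (f : ℕ → V) (s : ℕ) :
    ∀ (m : ℕ) (h : ∀ i, s ≤ i → i < s + m → G.Adj (f i) (f (i+1))),
      (buildW G f s m h).length = m
  | 0, _ => rfl
  | m+1, h => by
      simp [buildW, Walk.length_concat, buildW_length f s m]

lemma buildW_support (f : ℕ → V) (s : ℕ) :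
    ∀ (m : ℕ) (h : ∀ i, s ≤ i → i < s + m → G.Adj (f i) (f (i+1))),
      (buildW G f s m h).support = (List.range (m+1)).map (fun i => f (s + i))
  | 0, _ => by
      show (Walk.nil : G.Walk (f s) (f s)).support = _
      simp [List.range_succ]
  | m+1, h => by
      rw [buildW, Walk.support_concat, buildW_support f s m]
      rw [List.range_succ (n := m+1), List.map_append]
      simp

/-- Transfer a walk along a subgraph relation, keeping support and length. -/
lemma walk_le {H : SimpleGraph V} (hle : ∀ ⦃x y⦄, H.Adj x y → G.Adj x y) {a b : V}
    (w : H.Walk a b) : ∃ w' : G.Walk a b, w'.length = w.length ∧ w'.support = w.support := by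
  induction w with
  | nil => exact ⟨Walk.nil, rfl, rfl⟩
  | cons h p ih =>
    obtain ⟨w', h1, h2⟩ := ih
    exact ⟨Walk.cons (hle h) w', by simp [h1], by simp [h2]⟩

lemma support_eq_map {a b : V} (w : G.Walk a b) :
    w.support = (List.range (w.length+1)).map w.getVert := by
  induction w with
  | nil => simp [Walk.getVert]
  | cons h p ih =>
    rw [Walk.support_cons, Walk.length_cons,
      show List.range (p.length + 1 + 1) = 0 :: (List.range (p.length+1)).map Nat.succ from
        List.range_succ_eq_map,
      List.map_cons, List.map_map]
    rw [ih]
    congr 1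

lemma getVert_inj {a b : V} {w : G.Walk a b} (hw : w.IsPath) {i j : ℕ}
    (hi : i ≤ w.length) (hj : j ≤ w.length) (h : w.getVert i = w.getVert j) : i = j := by
  have hnd := hw.support_nodup
  rw [support_eq_map] at hnd
  exact List.inj_on_of_nodup_map hnd
    (by simp only [List.mem_range]; omega) (by simp only [List.mem_range]; omega) h

end BuildW

section Counting

variable {V : Type} [Fintype V] [DecidableEq V]

/-- Double counting of adjacent pairs between two finsets. -/
lemma double_count (H : SimpleGraph V) [DecidableRel H.Adj] (s t : Finset V) :
    ∑ x ∈ s, (t ∩ H.neighborFinset x).card = ∑ y ∈ t, (s ∩ H.neighborFinset y).card := by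
  have key : ∀ (s t : Finset V) (x : V),
      (t ∩ H.neighborFinset x).card = ∑ y ∈ t, if H.Adj x y then 1 else 0 := by
    intro s t x
    have he : t ∩ H.neighborFinset x = t.filter (fun y => H.Adj x y) := by
      ext y; simp [SimpleGraph.mem_neighborFinset]
    rw [he, Finset.card_filter]
  simp only [key s t, key t s]
  rw [Finset.sum_comm]
  refine Finset.sum_congr rfl fun y _ => Finset.sum_congr rfl fun x _ => ?_
  simp [H.adj_comm]

/-- Minimum-degree subgraph extraction (on a finset of vertices). -/
lemma min_deg_subset (H : SimpleGraph V) [DecidableRel H.Adj] (m : ℕ) :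
    ∀ (W : Finset V), (2*m - 2) * W.card < ∑ x ∈ W, (W ∩ H.neighborFinset x).card →
    ∃ U ⊆ W, U.Nonempty ∧ ∀ x ∈ U, m ≤ (U ∩ H.neighborFinset x).card := by
  suffices Hq : ∀ (n : ℕ) (W : Finset V), W.card = n →
      ((2*m - 2) * W.card < ∑ x ∈ W, (W ∩ H.neighborFinset x).card →
      ∃ U ⊆ W, U.Nonempty ∧ ∀ x ∈ U, m ≤ (U ∩ H.neighborFinset x).card) from
    fun W => Hq W.card W rfl
  intro n
  induction n using Nat.strong_induction_on with
  | _ n ih =>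
  intro W hn hsum
  by_cases hall : ∀ x ∈ W, m ≤ (W ∩ H.neighborFinset x).card
  · refine ⟨W, le_refl _, ?_, hall⟩
    rw [Finset.nonempty_iff_ne_empty]
    rintro rfl
    simp at hsum
  · push_neg at hall
    obtain ⟨x, hxW, hxdeg⟩ := hall
    set W' := W.erase x with hW'
    have hcard : W'.card = W.card - 1 := Finset.card_erase_of_mem hxW
    have hcardlt : W'.card < n := by
      have := Finset.card_pos.mpr ⟨x, hxW⟩
      omega
    have hterm : ∀ y ∈ W', (W ∩ H.neighborFinset y).card ≤
        (W' ∩ H.neighborFinset y).card + (if H.Adj x y then 1 else 0) := by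
      intro y hy
      have hsub : W ∩ H.neighborFinset y ⊆ insert x (W' ∩ H.neighborFinset y) := by
        intro z hz
        rcases Finset.mem_inter.mp hz with ⟨hz1, hz2⟩
        by_cases hzx : z = x
        · rw [hzx]; exact Finset.mem_insert_self _ _
        · exact Finset.mem_insert_of_mem (Finset.mem_inter.mpr
            ⟨Finset.mem_erase.mpr ⟨hzx, hz1⟩, hz2⟩)
      by_cases hadj : H.Adj x y
      · simpa [hadj] using (Finset.card_le_card hsub).trans (Finset.card_insert_le _ _)
      · have hsub2 : W ∩ H.neighborFinset y ⊆ W' ∩ H.neighborFinset y := by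
          intro z hz
          rcases Finset.mem_inter.mp hz with ⟨hz1, hz2⟩
          have hzx : z ≠ x := by
            rintro rfl
            simp only [SimpleGraph.mem_neighborFinset] at hz2
            exact hadj hz2.symm
          exact Finset.mem_inter.mpr ⟨Finset.mem_erase.mpr ⟨hzx, hz1⟩, hz2⟩
        simpa [hadj] using Finset.card_le_card hsub2
    have hcount : ∑ y ∈ W', (if H.Adj x y then 1 else 0) = (W' ∩ H.neighborFinset x).card := by
      have he : W' ∩ H.neighborFinset x = W'.filter (fun y => H.Adj x y) := by
        ext y; simp [SimpleGraph.mem_neighborFinset]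
      rw [he, Finset.card_filter]
    have hWsplit : ∑ y ∈ W, (W ∩ H.neighborFinset y).card =
        (W ∩ H.neighborFinset x).card + ∑ y ∈ W', (W ∩ H.neighborFinset y).card := by
      rw [hW', ← Finset.sum_erase_add W _ hxW]; ring
    have hxdeg' : (W' ∩ H.neighborFinset x).card ≤ (W ∩ H.neighborFinset x).card :=
      Finset.card_le_card (Finset.inter_subset_inter_right (Finset.erase_subset _ _))
    have hsum' : (2*m - 2) * W'.card < ∑ y ∈ W', (W' ∩ H.neighborFinset y).card := by
      have h1 : ∑ y ∈ W', (W ∩ H.neighborFinset y).card ≤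
          (∑ y ∈ W', (W' ∩ H.neighborFinset y).card) + (W' ∩ H.neighborFinset x).card := by
        calc ∑ y ∈ W', (W ∩ H.neighborFinset y).card
            ≤ ∑ y ∈ W', ((W' ∩ H.neighborFinset y).card + (if H.Adj x y then 1 else 0)) :=
              Finset.sum_le_sum hterm
          _ = _ := by rw [Finset.sum_add_distrib, hcount]
      have hW0 : 0 < W.card := Finset.card_pos.mpr ⟨x, hxW⟩
      have hWc : W.card = W'.card + 1 := by omega
      have hmul : (2*m - 2) * W.card = (2*m - 2) * W'.card + (2*m - 2) := by
        rw [hWc]; ring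
      omega
    obtain ⟨U, hUW', hU⟩ := ih W'.card (by omega) W' rfl hsum'
    exact ⟨U, hUW'.trans (Finset.erase_subset _ _), hU⟩

/-- Greedy path of prescribed length inside a min-degree set. -/
lemma greedy_path (H : SimpleGraph V) [DecidableRel H.Adj] (U : Finset V) (m : ℕ)
    (hdeg : ∀ x ∈ U, m ≤ (U ∩ H.neighborFinset x).card) (hU : U.Nonempty) :
    ∀ j, j ≤ m → ∃ (a b : V) (w : H.Walk a b), w.IsPath ∧ w.length = j ∧
      ∀ x ∈ w.support, x ∈ U := by
  intro j
  induction j with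
  | zero =>
    intro _
    obtain ⟨a, ha⟩ := hU
    exact ⟨a, a, Walk.nil, Walk.IsPath.nil, rfl, by simpa using ha⟩
  | succ j ih =>
    intro hj
    obtain ⟨a, b, w, hw, hwl, hws⟩ := ih (by omega)
    have hb : b ∈ U := hws b w.end_mem_support
    have hsupcard : w.support.toFinset.card ≤ j + 1 := by
      have := w.length_support
      calc w.support.toFinset.card ≤ w.support.length := w.support.toFinset_card_le
        _ = j + 1 := by omega
    have hex : ∃ y ∈ U ∩ H.neighborFinset b, y ∉ w.support := by
      by_contra hcon
      push_neg at hcon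
      have h1 : m ≤ (U ∩ H.neighborFinset b).card := hdeg b hb
      have hbmem : b ∈ w.support.toFinset := List.mem_toFinset.mpr w.end_mem_support
      have hbnot : b ∉ U ∩ H.neighborFinset b := by
        simp [SimpleGraph.mem_neighborFinset]
      have h3 : (U ∩ H.neighborFinset b).card ≤ (w.support.toFinset).card - 1 := by
        have hsub2 : U ∩ H.neighborFinset b ⊆ w.support.toFinset.erase b := by
          intro y hy
          exact Finset.mem_erase.mpr ⟨fun hyb => hbnot (hyb ▸ hy),
            List.mem_toFinset.mpr (hcon y hy)⟩
        have := Finset.card_le_card hsub2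
        rwa [Finset.card_erase_of_mem hbmem] at this
      omega
    obtain ⟨y, hy, hynot⟩ := hex
    rcases Finset.mem_inter.mp hy with ⟨hyU, hyN⟩
    have hadj : H.Adj b y := by simpa [SimpleGraph.mem_neighborFinset] using hyN
    refine ⟨a, y, w.concat hadj, ?_, by simp [Walk.length_concat, hwl], ?_⟩
    · rw [Walk.isPath_def, Walk.support_concat]
      rw [← List.concat_eq_append]; exact List.Nodup.concat hynot hw.support_nodup
    · intro x hx
      rw [Walk.support_concat] at hx
      rw [List.mem_append] at hx
      rcases hx with h | h
      · exact hws x h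
      · rw [List.mem_singleton] at h; rwa [h]

/-- A maximal path: one end has all its `U`-neighbours on the path. -/
lemma stuck_path (H : SimpleGraph V) [DecidableRel H.Adj] (U : Finset V) (hU : U.Nonempty) :
    ∃ (a b : V) (w : H.Walk a b), w.IsPath ∧ (∀ x ∈ w.support, x ∈ U) ∧
      ∀ y ∈ U ∩ H.neighborFinset b, y ∈ w.support := by
  classical
  set P : ℕ → Prop := fun j => ∃ (a b : V) (w : H.Walk a b), w.IsPath ∧ w.length = j ∧
      ∀ x ∈ w.support, x ∈ U with hP
  have hP0 : P 0 := by
    obtain ⟨a, ha⟩ := hU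
    exact ⟨a, a, Walk.nil, Walk.IsPath.nil, rfl, by simpa using ha⟩
  have hPbound : ∀ j, P j → j < Fintype.card V := by
    rintro j ⟨a, b, w, hw, hwl, hws⟩
    have h1 : w.support.toFinset.card = j + 1 := by
      rw [List.toFinset_card_of_nodup hw.support_nodup]
      have := w.length_support
      omega
    have h2 : w.support.toFinset.card ≤ Fintype.card V := Finset.card_le_univ _
    omega
  set N := Fintype.card V
  set j0 := Nat.findGreatest P N with hj0
  have hmax : P j0 := Nat.findGreatest_spec (m := 0) (Nat.zero_le _) hP0
  obtain ⟨a, b, w, hw, hwl, hws⟩ := hmax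
  refine ⟨a, b, w, hw, hws, ?_⟩
  intro y hy
  by_contra hynot
  rcases Finset.mem_inter.mp hy with ⟨hyU, hyN⟩
  have hadj : H.Adj b y := by simpa [SimpleGraph.mem_neighborFinset] using hyN
  have hnext : P (j0 + 1) := by
    refine ⟨a, y, w.concat hadj, ?_, by simp [Walk.length_concat, hwl], ?_⟩
    · rw [Walk.isPath_def, Walk.support_concat]
      rw [← List.concat_eq_append]; exact List.Nodup.concat hynot hw.support_nodup
    · intro x hx
      rw [Walk.support_concat] at hx
      rw [List.mem_append] at hx
      rcases hx with h | h
      · exact hws x h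
      · rw [List.mem_singleton] at h; rwa [h]
  have hb1 : j0 + 1 ≤ N := le_of_lt (hPbound _ hnext)
  exact Nat.findGreatest_is_greatest (by omega) hb1 hnext

end Counting

section Assemble

variable {V : Type} {G : SimpleGraph V}

lemma ends_ne {u v : V} {p : G.Walk u v} (hp : p.IsPath) (hl : 1 ≤ p.length) : u ≠ v := by
  cases p with
  | nil => simp at hl
  | cons h q =>
    intro huv
    have hnd := hp.support_nodup
    rw [Walk.support_cons] at hnd
    rcases List.nodup_cons.mp hnd with ⟨hu, _⟩
    exact hu (huv ▸ q.end_mem_support)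

lemma assemble [DecidableEq V] {u v : V} (p : G.Walk u v) (hp : p.IsPath) (hl : 1 ≤ p.length)
    {w₁ w₂ : V} (arc : G.Walk w₁ w₂) (harc : arc.IsPath)
    (hdisj : ∀ x ∈ arc.support, x ∉ p.support)
    (h1 : G.Adj u w₁) (h2 : G.Adj w₂ v) :
    ∃ c : G.Walk u u, c.IsCycle ∧ c.length = arc.length + p.length + 2 := by
  have huv : u ≠ v := ends_ne hp hl
  refine ⟨Walk.cons h1 (arc.append (Walk.cons h2 p.reverse)), ?_, ?_⟩
  · rw [Walk.cons_isCycle_iff]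
    constructor
    · apply Walk.IsPath.mk'
      rw [Walk.support_append, Walk.support_cons, List.tail_cons, Walk.support_reverse]
      refine List.Nodup.append harc.support_nodup ?_ ?_
      · exact List.nodup_reverse.mpr hp.support_nodup
      · intro x hx hx2
        exact hdisj x hx (List.mem_reverse.mp hx2)
    · intro hmem
      rw [Walk.edges_append, List.mem_append] at hmem
      rcases hmem with hmem | hmem
      · exact hdisj u (arc.fst_mem_support_of_mem_edges hmem) p.start_mem_support
      · rw [Walk.edges_cons, List.mem_cons] at hmem
        rcases hmem with hmem | hmem
        · rw [Sym2.eq_iff] at hmem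
          rcases hmem with ⟨hu, _⟩ | ⟨hu, hw⟩
          · exact hdisj w₂ arc.end_mem_support (hu ▸ p.start_mem_support)
          · exact huv hu
        · rw [Walk.edges_reverse, List.mem_reverse] at hmem
          exact hdisj w₁ arc.start_mem_support (p.snd_mem_support_of_mem_edges hmem)
  · simp only [Walk.length_cons, Walk.length_append, Walk.length_reverse]
    omega

end Assemble

section Graphs

variable {V : Type} [DecidableEq V]

/-- The restriction of `G` to a vertex set `S`. -/
def gRes (G : SimpleGraph V) (S : Finset V) : SimpleGraph V where
  Adj x y := G.Adj x y ∧ x ∈ S ∧ y ∈ S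
  symm := ⟨fun x y ⟨h, hx, hy⟩ => ⟨h.symm, hy, hx⟩⟩
  loopless := ⟨fun x ⟨h, _, _⟩ => G.loopless.irrefl x h⟩

instance (G : SimpleGraph V) [DecidableRel G.Adj] (S : Finset V) :
    DecidableRel (gRes G S).Adj := fun x y =>
  inferInstanceAs (Decidable (G.Adj x y ∧ x ∈ S ∧ y ∈ S))

/-- The edges of `G` touching `S`, avoiding `J`. -/
def gTouch (G : SimpleGraph V) (S J : Finset V) : SimpleGraph V where
  Adj x y := G.Adj x y ∧ (x ∈ S ∨ y ∈ S) ∧ x ∉ J ∧ y ∉ J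
  symm := ⟨fun x y ⟨h, hor, hx, hy⟩ => ⟨h.symm, hor.symm, hy, hx⟩⟩
  loopless := ⟨fun x ⟨h, _, _⟩ => G.loopless.irrefl x h⟩

instance (G : SimpleGraph V) [DecidableRel G.Adj] (S J : Finset V) :
    DecidableRel (gTouch G S J).Adj := fun x y =>
  inferInstanceAs (Decidable (G.Adj x y ∧ (x ∈ S ∨ y ∈ S) ∧ x ∉ J ∧ y ∉ J))

lemma gRes_adj (G : SimpleGraph V) (S : Finset V) (x y : V) :
    (gRes G S).Adj x y ↔ G.Adj x y ∧ x ∈ S ∧ y ∈ S := Iff.rfl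

lemma gTouch_adj (G : SimpleGraph V) (S J : Finset V) (x y : V) :
    (gTouch G S J).Adj x y ↔ G.Adj x y ∧ (x ∈ S ∨ y ∈ S) ∧ x ∉ J ∧ y ∉ J := Iff.rfl

end Graphs


/-- Final numeric computation for Case Y. -/
lemma final_arith (k n l d aC T S1 Tot : ℕ)
    (hk : 2 ≤ k) (hl1 : 1 ≤ l) (hd2 : 2 ≤ d) (hdl : d + l = 2*k - 3) (hdk : d ≤ 2*k - 4)
    (hn2 : 5*k^2 + 2 ≤ n)
    (haC : 5*k^2 ≤ aC + (2*k - 2))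
    (hTbig : T ≤ (2*d - 2) * aC)
    (hTot : Tot + T = 2*S1)
    (hS1R : (aC : ℝ) * ((n:ℝ)/(2*(k:ℝ)-1) + 4*(k:ℝ) - ((l:ℝ)+1)) ≤ (S1 : ℝ)) :
    (2*(d+2) - 2) * n < Tot := by
  have h2k1 : (0:ℝ) < 2*(k:ℝ) - 1 := by
    have : (2:ℝ) ≤ (k:ℝ) := by exact_mod_cast hk
    linarith
  have hgoal2 : 2*(d+2) - 2 = 2*d + 2 := by omega
  rw [hgoal2]
  have hKR : (2:ℝ) ≤ (k:ℝ) := by exact_mod_cast hk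
  set aR := ((aC : ℕ) : ℝ) with haRdef
  have haR : 5*(k:ℝ)^2 ≤ aR + (2*(k:ℝ) - 2) := by
    have hc1 : ((2*k - 2 : ℕ):ℝ) = 2*(k:ℝ)-2 := by
      have h22 : 2 ≤ 2*k := by omega
      push_cast [Nat.cast_sub h22]
      ring
    calc (5*(k:ℝ)^2) = ((5*k^2 : ℕ) : ℝ) := by push_cast; ring
      _ ≤ ((aC + (2*k-2) : ℕ) : ℝ) := by exact_mod_cast haC
      _ = aR + (2*(k:ℝ)-2) := by rw [Nat.cast_add, hc1]
  have haRpos : (0:ℝ) < aR := by nlinarith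
  have hNR : 5*(k:ℝ)^2 + 2 ≤ (n:ℝ) := by exact_mod_cast hn2
  have hNpos : (0:ℝ) < (n:ℝ) := by nlinarith
  have hTR : (T:ℝ) ≤ (2*(d:ℝ)-2) * aR := by
    have hc1 : ((2*d - 2 : ℕ):ℝ) = 2*(d:ℝ)-2 := by
      have h22 : 2 ≤ 2*d := by omega
      push_cast [Nat.cast_sub h22]
      ring
    calc (T:ℝ) ≤ ((2*d-2) * aC : ℕ) := by exact_mod_cast hTbig
      _ = (2*(d:ℝ)-2) * aR := by rw [Nat.cast_mul, hc1]
  have hTotR : (Tot:ℝ) + (T:ℝ) = 2*(S1:ℝ) := by exact_mod_cast hTot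
  have hDL : (d:ℝ) + (l:ℝ) = 2*(k:ℝ) - 3 := by
    have h1 : d + l + 3 = 2*k := by omega
    have h2 : ((d:ℝ) + (l:ℝ)) + 3 = 2*(k:ℝ) := by exact_mod_cast congrArg (Nat.cast : ℕ → ℝ) h1
    linarith
  have hLR : (1:ℝ) ≤ (l:ℝ) := by exact_mod_cast hl1
  have hDR : (2:ℝ) ≤ (d:ℝ) := by exact_mod_cast hd2
  have hX : 2*(aR * ((n:ℝ)/(2*(k:ℝ)-1) + 4*(k:ℝ) - ((l:ℝ)+1)))
      - (2*(d:ℝ)-2)*aR ≤ (Tot:ℝ) := by linarith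
  have h2a : (4*(k:ℝ)-6) * (2*(k:ℝ)-1) ≤ 2*aR := by nlinarith
  have hdiv : (4*(k:ℝ)-6) * (n:ℝ) ≤ 2*aR*(n:ℝ)/(2*(k:ℝ)-1) := by
    rw [le_div_iff₀ h2k1]
    have hmul := mul_le_mul_of_nonneg_right h2a (le_of_lt hNpos)
    linear_combination hmul
  have e1 : 2*(aR * ((n:ℝ)/(2*(k:ℝ)-1) + 4*(k:ℝ) - ((l:ℝ)+1))) - (2*(d:ℝ)-2)*aR
      = 2*aR*(n:ℝ)/(2*(k:ℝ)-1) + aR*(8*(k:ℝ) - 2*((l:ℝ)+(d:ℝ))) := by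
    field_simp
    ring
  have e2 : 8*(k:ℝ) - 2*((l:ℝ)+(d:ℝ)) = 4*(k:ℝ)+6 := by
    have h3 : (l:ℝ)+(d:ℝ) = 2*(k:ℝ)-3 := by linarith
    rw [h3]; ring
  have hDbound : 2*(d:ℝ)+2 ≤ 4*(k:ℝ)-6 := by
    have h1 : d + 4 ≤ 2*k := by omega
    have h2 : (d:ℝ) + 4 ≤ 2*(k:ℝ) := by exact_mod_cast h1
    linarith
  have hfin : ((2*d+2 : ℕ) : ℝ) * (n:ℝ) < (Tot:ℝ) := by
    have hcg : ((2*d+2 : ℕ):ℝ) = 2*(d:ℝ)+2 := by push_cast; ring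
    rw [hcg]
    have hpos2 : (0:ℝ) < aR*(4*(k:ℝ)+6) := mul_pos haRpos (by linarith)
    calc (2*(d:ℝ)+2) * (n:ℝ) ≤ (4*(k:ℝ)-6)*(n:ℝ) :=
        mul_le_mul_of_nonneg_right hDbound (le_of_lt hNpos)
      _ < 2*aR*(n:ℝ)/(2*(k:ℝ)-1) + aR*(4*(k:ℝ)+6) := by linarith
      _ = 2*(aR * ((n:ℝ)/(2*(k:ℝ)-1) + 4*(k:ℝ) - ((l:ℝ)+1))) - (2*(d:ℝ)-2)*aR := by
          rw [e1, e2]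
      _ ≤ (Tot:ℝ) := hX
  exact_mod_cast hfin

end CNLAux

open CNLAux SimpleGraph Finset

/-- Let `k ≥ 2`, `ε > 0`, and let `G` be a `C_{2k-1}`-free graph on `n ≥ 4k/ε` vertices with
minimum degree at least `(1/(2k-1) + ε)n`.  If two vertices `u`, `v` are joined by a path of
odd length at most `2k-3`, then they have fewer than `5k²` common neighbours. -/
theorem common_neighbours_lt_of_odd_path {V : Type} [Fintype V] [DecidableEq V]
    (G : SimpleGraph V) [DecidableRel G.Adj] (k : ℕ) (hk : 2 ≤ k) (ε : ℝ) (hε : 0 < ε)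
    (hn : (4 * k : ℝ) / ε ≤ Fintype.card V)
    (hfree : ¬ ∃ (v : V) (w : G.Walk v v), w.IsCycle ∧ w.length = 2*k-1)
    (hdeg : ∀ v : V, ((1 : ℝ) / (2*k - 1) + ε) * Fintype.card V ≤ G.degree v)
    (u v : V) (p : G.Walk u v) (hp : p.IsPath) (hodd : Odd p.length)
    (hlen : p.length ≤ 2*k-3) :
    (G.neighborFinset u ∩ G.neighborFinset v).card < 5 * k^2 := by
  classical
  by_contra hcon
  push_neg at hcon
  set n := Fintype.card V with hnn
  set A : Finset V := G.neighborFinset u ∩ G.neighborFinset v with hA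
  obtain ⟨c, hc⟩ := hodd
  set l := p.length with hl
  have hcle : c ≤ k - 2 := by omega
  set t0 := k - 1 - c with ht0def
  set d := 2*t0 - 2 with hddef
  have ht01 : 1 ≤ t0 := by omega
  have hld : d + l + 2 = 2*k - 1 := by omega
  have hdl : d + l = 2*k - 3 := by omega
  have hl1 : 1 ≤ l := by omega
  set Jf := p.support.toFinset with hJf
  have hJcard : Jf.card = l + 1 := by
    rw [hJf, List.toFinset_card_of_nodup hp.support_nodup, SimpleGraph.Walk.length_support]
  set A' := A \ Jf with hA'
  have hA'sub : A' ⊆ A := Finset.sdiff_subset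
  have hAadj : ∀ x ∈ A, G.Adj u x ∧ G.Adj x v := by
    intro x hx
    rcases Finset.mem_inter.mp hx with ⟨h1, h2⟩
    simp only [SimpleGraph.mem_neighborFinset] at h1 h2
    exact ⟨h1, h2.symm⟩
  have hA'J : ∀ x ∈ A', x ∉ p.support := by
    intro x hx
    have := (Finset.mem_sdiff.mp hx).2
    simpa [hJf, List.mem_toFinset] using this
  have huA : u ∉ A := by
    intro h
    exact G.loopless.irrefl u (hAadj u h).1
  have hvA : v ∉ A := by
    intro h
    exact G.loopless.irrefl v (hAadj v h).2
  have hn2 : 5*k^2 + 2 ≤ n := by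
    have hsub : insert u (insert v A) ⊆ Finset.univ := Finset.subset_univ _
    have h1 : (insert u (insert v A)).card = A.card + 2 := by
      rw [Finset.card_insert_of_notMem (by simp [huA, ends_ne hp hl1]),
        Finset.card_insert_of_notMem hvA]
    have := Finset.card_le_card hsub
    rw [Finset.card_univ, h1] at this
    omega
  have hA'card : 5*k^2 ≤ A'.card + (2*k - 2) := by
    have h1 : A.card ≤ A'.card + Jf.card := Finset.card_le_card_sdiff_add_card
    omega
  have h2k1 : (0:ℝ) < 2*(k:ℝ) - 1 := by
    have : (2:ℝ) ≤ (k:ℝ) := by exact_mod_cast hk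
    linarith
  have hdeg' : ∀ x : V, (n:ℝ)/(2*(k:ℝ)-1) + 4*(k:ℝ) ≤ (G.degree x : ℝ) := by
    intro x
    have h1 := hdeg x
    have h2 : (4*(k:ℝ)) ≤ ε * n := by
      rw [div_le_iff₀ hε] at hn
      calc (4*(k:ℝ)) ≤ (n:ℝ) * ε := by exact_mod_cast hn
        _ = ε * n := by ring
    have h3 : ((1:ℝ)/(2*(k:ℝ)-1) + ε) * n = (n:ℝ)/(2*(k:ℝ)-1) + ε * n := by
      field_simp
    have h4 : ((2:ℝ)*(k:ℕ) - 1) = (2*(k:ℝ)-1) := by push_cast; ring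
    rw [h4] at h1
    rw [h3] at h1
    linarith
  -- main goal reduction: we need a suitable connecting path of length `d`
  suffices harc : ∃ (w₁ w₂ : V) (arc : G.Walk w₁ w₂), arc.IsPath ∧ arc.length = d ∧
      (∀ x ∈ arc.support, x ∉ p.support) ∧ w₁ ∈ A ∧ w₂ ∈ A by
    obtain ⟨w₁, w₂, arc, h1, h2, h3, h4, h5⟩ := harc
    obtain ⟨cyc, hcyc, hcyclen⟩ := assemble p hp hl1 arc h1 h3
      (hAadj w₁ h4).1 (hAadj w₂ h5).2
    exact hfree ⟨u, cyc, hcyc, by omega⟩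
  by_cases ht0 : t0 = 1
  · -- trivial case: single common neighbour off the path
    have hd0 : d = 0 := by omega
    have hA'ne : A'.Nonempty := by
      rw [← Finset.card_pos]
      have hkk : k ≤ k*k := Nat.le_mul_of_pos_left k (by omega)
      have hsq : k^2 = k*k := sq k
      omega
    obtain ⟨a, ha⟩ := hA'ne
    refine ⟨a, a, Walk.nil, Walk.IsPath.nil, by simp [hd0], ?_, hA'sub ha, hA'sub ha⟩
    intro x hx
    rw [Walk.support_nil, List.mem_singleton] at hx
    rw [hx]
    exact hA'J a ha
  · have ht02 : 2 ≤ t0 := by omega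
    have hd2 : 2 ≤ d := by omega
    have hdk : d ≤ 2*k - 4 := by omega
    set GA := gRes G A' with hGA
    set T := ∑ x ∈ A', (A' ∩ GA.neighborFinset x).card with hT
    by_cases hTbig : (2*d - 2) * A'.card < T
    · -- Case X: many internal edges
      obtain ⟨U, hUA', hUne, hUdeg⟩ := min_deg_subset GA d A' hTbig
      obtain ⟨a, b, w, hw, hwl, hws⟩ := greedy_path GA U d hUdeg hUne d le_rfl
      obtain ⟨w', hlw', hsw'⟩ := walk_le
        (show ∀ ⦃x y⦄, GA.Adj x y → G.Adj x y from fun x y h => h.1) w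
      have hsupA' : ∀ x ∈ w'.support, x ∈ A' := by
        intro x hx
        rw [hsw'] at hx
        exact hUA' (hws x hx)
      refine ⟨a, b, w', Walk.IsPath.mk' (by rw [hsw']; exact hw.support_nodup),
        by omega, ?_, ?_, ?_⟩
      · intro x hx
        exact hA'J x (hsupA' x hx)
      · exact hA'sub (hsupA' a w'.start_mem_support)
      · exact hA'sub (hsupA' b w'.end_mem_support)
    · -- Case Y
      push_neg at hTbig
      set GB := gTouch G A' Jf with hGB
      have hTotal : (2*(d+2) - 2) * (Finset.univ : Finset V).card <
          ∑ x ∈ (Finset.univ : Finset V),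
            ((Finset.univ : Finset V) ∩ GB.neighborFinset x).card := by
        have hsimp : ∑ x ∈ (Finset.univ : Finset V),
            ((Finset.univ : Finset V) ∩ GB.neighborFinset x).card
            = ∑ x ∈ (Finset.univ : Finset V), (GB.neighborFinset x).card :=
          Finset.sum_congr rfl fun x _ => by rw [Finset.univ_inter]
        rw [hsimp, Finset.card_univ, ← hnn]
        set S1 := ∑ a ∈ A', (GB.neighborFinset a).card with hS1
        set T' := ∑ a ∈ A', (A' ∩ GB.neighborFinset a).card with hT'
        have hTT' : T' = T := by
          refine Finset.sum_congr rfl fun a ha => ?_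
          have haJ : a ∉ Jf := (Finset.mem_sdiff.mp ha).2
          congr 1
          ext y
          simp only [Finset.mem_inter, SimpleGraph.mem_neighborFinset, hGB, hGA,
            gTouch_adj, gRes_adj]
          constructor
          · rintro ⟨hyA, hadj, -, -, -⟩
            exact ⟨hyA, hadj, ha, hyA⟩
          · rintro ⟨hyA, hadj, -, -⟩
            exact ⟨hyA, hadj, Or.inl ha, haJ, (Finset.mem_sdiff.mp hyA).2⟩
        have hsplit : S1 + ∑ x ∈ A'ᶜ, (GB.neighborFinset x).card
            = ∑ x ∈ (Finset.univ : Finset V), (GB.neighborFinset x).card :=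
          Finset.sum_add_sum_compl A' _
        have hcompl : ∀ x ∈ A'ᶜ, (GB.neighborFinset x) = A' ∩ GB.neighborFinset x := by
          intro x hx
          rw [Finset.mem_compl] at hx
          ext y
          simp only [Finset.mem_inter, SimpleGraph.mem_neighborFinset, hGB, gTouch_adj]
          constructor
          · rintro ⟨hadj, hor, hj1, hj2⟩
            rcases hor with h | h
            · exact absurd h hx
            · exact ⟨h, hadj, Or.inr h, hj1, hj2⟩
          · rintro ⟨hyA, h⟩
            exact h
        have hdc : ∑ x ∈ A'ᶜ, (A' ∩ GB.neighborFinset x).card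
            = ∑ a ∈ A', (A'ᶜ ∩ GB.neighborFinset a).card := double_count GB _ _
        have hpart : ∀ a : V, (A'ᶜ ∩ GB.neighborFinset a).card
            + (A' ∩ GB.neighborFinset a).card = (GB.neighborFinset a).card := by
          intro a
          have e1 : A'ᶜ ∩ GB.neighborFinset a = GB.neighborFinset a \ A' := by
            ext y
            simp only [Finset.mem_inter, Finset.mem_compl, Finset.mem_sdiff]
            tauto
          have e2 : A' ∩ GB.neighborFinset a = GB.neighborFinset a ∩ A' :=
            Finset.inter_comm _ _
          rw [e1, e2]
          exact Finset.card_sdiff_add_card_inter _ _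
        have hsum_part : ∑ a ∈ A', (A'ᶜ ∩ GB.neighborFinset a).card + T' = S1 := by
          rw [hT', hS1, ← Finset.sum_add_distrib]
          exact Finset.sum_congr rfl fun a _ => hpart a
        have hcomplsum : ∑ x ∈ A'ᶜ, (GB.neighborFinset x).card
            = ∑ x ∈ A'ᶜ, (A' ∩ GB.neighborFinset x).card :=
          Finset.sum_congr rfl fun x hx => by
            rw [hcompl x hx, ← Finset.inter_assoc, Finset.inter_self]
        have hTot : (∑ x ∈ (Finset.univ : Finset V), (GB.neighborFinset x).card) + T
            = 2 * S1 := by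
          rw [← hsplit, hcomplsum, hdc]
          omega
        set Tot := ∑ x ∈ (Finset.univ : Finset V), (GB.neighborFinset x).card with hTot2
        -- lower bound for the degrees into GB
        have hdegGB : ∀ a ∈ A', G.degree a ≤ (GB.neighborFinset a).card + (l+1) := by
          intro a ha
          have hsub : G.neighborFinset a \ Jf ⊆ GB.neighborFinset a := by
            intro y hy
            rcases Finset.mem_sdiff.mp hy with ⟨hy1, hy2⟩
            simp only [SimpleGraph.mem_neighborFinset] at hy1 ⊢
            rw [hGB, gTouch_adj]
            exact ⟨hy1, Or.inl ha, (Finset.mem_sdiff.mp ha).2, hy2⟩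
          have h1 : (G.neighborFinset a).card ≤ (G.neighborFinset a \ Jf).card + Jf.card :=
            Finset.card_le_card_sdiff_add_card
          have h2 : (G.neighborFinset a \ Jf).card ≤ (GB.neighborFinset a).card :=
            Finset.card_le_card hsub
          have h3 : (G.neighborFinset a).card = G.degree a := G.card_neighborFinset_eq_degree a
          omega
        -- real-number bound for S1
        have hS1R : (A'.card : ℝ) * ((n:ℝ)/(2*(k:ℝ)-1) + 4*(k:ℝ) - ((l:ℝ)+1)) ≤ (S1 : ℝ) := by
          have hterm : ∀ a ∈ A', ((n:ℝ)/(2*(k:ℝ)-1) + 4*(k:ℝ) - ((l:ℝ)+1))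
              ≤ ((GB.neighborFinset a).card : ℝ) := by
            intro a ha
            have hh1 := hdeg' a
            have hh2 := hdegGB a ha
            have hh2' : (G.degree a : ℝ) ≤ ((GB.neighborFinset a).card : ℝ) + ((l:ℝ)+1) := by
              exact_mod_cast hh2
            linarith
          have := Finset.sum_le_sum hterm
          rw [Finset.sum_const] at this
          have hcast : ((S1:ℕ):ℝ) = ∑ a ∈ A', ((GB.neighborFinset a).card : ℝ) := by
            rw [hS1]; push_cast; ring
          rw [hcast]
          simpa [nsmul_eq_mul] using this
        exact final_arith k n l d A'.card T S1 Tot hk hl1 hd2 hdl hdk hn2 hA'card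
          hTbig hTot hS1R
      obtain ⟨U, _, hUne, hUdeg⟩ := min_deg_subset GB (d+2) Finset.univ hTotal
      obtain ⟨a, b, w, hw, hws, hstuck⟩ := stuck_path GB U hUne
      set w' := w.reverse with hw'def
      have hw'path : w'.IsPath := hw.reverse
      have hbU : b ∈ U := hws b w.end_mem_support
      set nbrs := U ∩ GB.neighborFinset b with hnbrs
      have hnbrscard : d + 2 ≤ nbrs.card := hUdeg b hbU
      have hnbrssup : ∀ y ∈ nbrs, y ∈ w'.support := by
        intro y hy
        rw [hw'def, Walk.support_reverse, List.mem_reverse]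
        exact hstuck y hy
      set len := w'.length with hlendef
      set img := (Finset.range (len+1)).filter (fun i => w'.getVert i ∈ nbrs) with himg
      have hb0 : w'.getVert 0 = b := Walk.getVert_zero w'
      have himgsub : nbrs ⊆ img.image (fun i => w'.getVert i) := by
        intro y hy
        have hy2 := hnbrssup y hy
        rw [support_eq_map] at hy2
        rcases List.mem_map.mp hy2 with ⟨i, hi1, hi2⟩
        rw [List.mem_range] at hi1
        refine Finset.mem_image.mpr ⟨i, Finset.mem_filter.mpr
          ⟨Finset.mem_range.mpr (by omega), by rw [hi2]; exact hy⟩, hi2⟩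
      have himgcard : d + 2 ≤ img.card :=
        le_trans hnbrscard (le_trans (Finset.card_le_card himgsub) Finset.card_image_le)
      have himgne : img.Nonempty := Finset.card_pos.mp (by omega)
      set j := img.max' himgne with hjdef
      have hjmem : j ∈ img := img.max'_mem himgne
      have hjr : j ∈ Finset.range (len+1) := (Finset.mem_filter.mp hjmem).1
      have hjn : w'.getVert j ∈ nbrs := (Finset.mem_filter.mp hjmem).2
      have hjlen : j ≤ len := by rw [Finset.mem_range] at hjr; omega
      have h0img : ∀ i ∈ img, 1 ≤ i := by
        intro i hi
        have hin := (Finset.mem_filter.mp hi).2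
        by_contra h0
        push_neg at h0
        have hi0 : i = 0 := by omega
        rw [hi0, hb0, hnbrs] at hin
        have := (Finset.mem_inter.mp hin).2
        simp only [SimpleGraph.mem_neighborFinset] at this
        exact GB.loopless.irrefl b this
      have hjge : d + 2 ≤ j := by
        have hsub : img ⊆ Finset.Icc 1 j := by
          intro i hi
          exact Finset.mem_Icc.mpr ⟨h0img i hi, Finset.le_max' img i hi⟩
        have := Finset.card_le_card hsub
        rw [Nat.card_Icc] at this
        omega
      have hchord : GB.Adj b (w'.getVert j) := by
        have := (Finset.mem_inter.mp hjn).2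
        simpa [SimpleGraph.mem_neighborFinset] using this
      set L := j + 1 with hLdef
      have hL0 : 0 < L := by omega
      set φ : ℕ → V := fun i => w'.getVert (i % L) with hφ
      have hmodle : ∀ i : ℕ, i % L ≤ j := by
        intro i
        have := Nat.mod_lt i hL0
        omega
      have hφadj : ∀ i, GB.Adj (φ i) (φ (i+1)) := by
        intro i
        rcases Nat.lt_or_ge (i % L) j with hr | hr
        · have hsucc : (i+1) % L = i % L + 1 := by
            rw [← Nat.mod_add_mod, Nat.mod_eq_of_lt (by omega)]
          simp only [hφ]
          rw [hsucc]
          exact w'.adj_getVert_succ (lt_of_lt_of_le hr hjlen)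
        · have hrj : i % L = j := le_antisymm (hmodle i) hr
          have hsucc : (i+1) % L = 0 := by
            rw [← Nat.mod_add_mod, hrj, hLdef, Nat.mod_self]
          simp only [hφ]
          rw [hsucc, hrj, hb0]
          exact hchord.symm
      have hwin : ∀ i, (φ i ∈ A') ∨ (φ (i+1) ∈ A') := by
        intro i
        have h := hφadj i
        rw [hGB, gTouch_adj] at h
        exact h.2.1
      have hnotJ : ∀ i, φ i ∉ Jf := by
        intro i
        have h := hφadj i
        rw [hGB, gTouch_adj] at h
        exact h.2.2.1
      have ht0d : d = 2*(t0-1) := by omega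
      have hpair : ∃ i, (φ i ∈ A') ∧ (φ (i+d) ∈ A') := by
        by_contra hcp
        push_neg at hcp
        refine window_diff (fun i => φ i ∈ A') hwin (t0-1) ?_
        rintro i ⟨hq1, hq2⟩
        exact hcp i hq1 (by rw [ht0d]; exact hq2)
      obtain ⟨i, hi1, hi2⟩ := hpair
      set i₀ := i % L with hi₀
      have hLd : d < L := by omega
      have hmod1 : φ i₀ = φ i := by
        simp only [hφ]
        rw [hi₀, Nat.mod_mod_of_dvd i dvd_rfl]
      have hmod2 : φ (i₀ + d) = φ (i + d) := by
        simp only [hφ]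
        congr 1
        rw [hi₀]
        exact Nat.mod_add_mod i L d
      have hQ1 : φ i₀ ∈ A' := by rw [hmod1]; exact hi1
      have hQ2 : φ (i₀ + d) ∈ A' := by rw [hmod2]; exact hi2
      have harcadj : ∀ s, i₀ ≤ s → s < i₀ + d → GB.Adj (φ s) (φ (s+1)) :=
        fun s _ _ => hφadj s
      set arcB := buildW GB φ i₀ d harcadj with harcBdef
      have harcBsupp : arcB.support = (List.range (d+1)).map (fun s => φ (i₀ + s)) :=
        buildW_support φ i₀ d harcadj
      have harcBlen : arcB.length = d := buildW_length φ i₀ d harcadj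
      have harcpath : arcB.IsPath := by
        apply Walk.IsPath.mk'
        rw [harcBsupp]
        refine List.Nodup.map_on ?_ List.nodup_range
        intro s hs s' hs' hss
        rw [List.mem_range] at hs hs'
        simp only [hφ] at hss
        have e1 : (i₀ + s) % L ≤ j := hmodle _
        have e2 : (i₀ + s') % L ≤ j := hmodle _
        have hvv := getVert_inj hw'path (le_trans e1 hjlen) (le_trans e2 hjlen) hss
        have hmeq : Nat.ModEq L (i₀+s) (i₀+s') := hvv
        have hmeq2 : Nat.ModEq L s s' := Nat.ModEq.add_left_cancel' i₀ hmeq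
        have hsl : s % L = s := Nat.mod_eq_of_lt (by omega)
        have hsl' : s' % L = s' := Nat.mod_eq_of_lt (by omega)
        have : s % L = s' % L := hmeq2
        omega
      obtain ⟨arc, harclen, harcsupp⟩ := walk_le
        (show ∀ ⦃x y⦄, GB.Adj x y → G.Adj x y from fun x y h => h.1) arcB
      refine ⟨φ i₀, φ (i₀ + d), arc,
        Walk.IsPath.mk' (by rw [harcsupp]; exact harcpath.support_nodup),
        by rw [harclen, harcBlen], ?_, hA'sub hQ1, hA'sub hQ2⟩
      intro x hx
      rw [harcsupp, harcBsupp] at hx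
      rcases List.mem_map.mp hx with ⟨s, _, rfl⟩
      intro hmem
      exact hnotJ (i₀ + s) (by rw [hJf]; exact List.mem_toFinset.mpr hmem)
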